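/- Let G be a finite abelian group, Ĝ its character group, and suppose V = ⊕_{s∈Ĝ} V_s and W = ⊕_{s∈Ĝ} W_s are Ĝ-graded finite-dimensional complex inner product spaces (orthogonal decompositions). Let s_1,...,s_4 ∈ Ĝ, let B_a = (B_a^s)_{s} with B_a^s : V_s → V_{s+s_a}, and I = (I^s)_s with I^s : W_s → V_s, and suppose for every s ∈ Ĝ that Σ_{a=1}^4 ( B_a^{s-s_a} (B_a^{s-s_a})† - (B_a^s)† B_a^s ) + I^s (I^s)† = ζ_s · id_{V_s} with ζ_s > 0. If S = ⊕_s S_s with S_s ⊆ V_s satisfies B_a^s(S_s) ⊆ S_{s+s_a} for all a, s and range(I^s) ⊆ S_s for all s, then S_s = V_s for every s. -/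

import Mathlib

open LinearMap

local notation "⟪" x ", " y "⟫" => @inner ℂ _ _ x y

section Helpers

variable {V : Type*} [NormedAddCommGroup V] [InnerProductSpace ℂ V] [FiniteDimensional ℂ V]

/-- Trace of an endomorphism via an orthonormal basis. -/
lemma trace_eq_sum_inner_aux {ι : Type*} [Fintype ι] [DecidableEq ι]
    (b : OrthonormalBasis ι ℂ V) (f : V →ₗ[ℂ] V) :
    LinearMap.trace ℂ V f = ∑ i, ⟪b i, f (b i)⟫ := by
  rw [LinearMap.trace_eq_matrix_trace ℂ b.toBasis]
  simp only [Matrix.trace, Matrix.diag, LinearMap.toMatrix_apply,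
    OrthonormalBasis.coe_toBasis, OrthonormalBasis.coe_toBasis_repr_apply,
    OrthonormalBasis.repr_apply_apply]

/-- If a family of submodules is pairwise orthogonal with supremum `⊤`, and `y` is
orthogonal to all members of the family except possibly `p u`, then `y ∈ p u`. -/
lemma mem_of_orthogonal_family {ι : Type*} (p : ι → Submodule ℂ V)
    (horth : ∀ s s', s ≠ s' → ∀ x ∈ p s, ∀ y ∈ p s', ⟪x, y⟫ = 0)
    (htop : (⨆ s, p s) = ⊤) (u : ι) (y : V)
    (h : ∀ u', u' ≠ u → ∀ z ∈ p u', ⟪y, z⟫ = 0) : y ∈ p u := by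
  have hsplit : (⊤ : Submodule ℂ V) ≤ p u ⊔ ⨆ i : {i // i ≠ u}, p i := by
    rw [← htop]
    refine iSup_le fun i => ?_
    by_cases hi : i = u
    · subst hi; exact le_sup_left
    · exact le_trans (le_iSup (fun i : {i // i ≠ u} => p i.1) ⟨i, hi⟩) le_sup_right
  obtain ⟨c, hc, d, hd, hycd⟩ := Submodule.mem_sup.mp (hsplit (Submodule.mem_top (x := y)))
  have hyd : ∀ z ∈ (⨆ i : {i // i ≠ u}, p i), ⟪y, z⟫ = 0 ∧ ⟪c, z⟫ = 0 := by
    intro z hz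
    refine Submodule.iSup_induction _ (motive := fun z => ⟪y, z⟫ = 0 ∧ ⟪c, z⟫ = 0) hz ?_ ?_ ?_
    · rintro ⟨i, hi⟩ x hx
      exact ⟨h i hi x hx, horth u i (Ne.symm hi) c hc x hx⟩
    · simp
    · intro a b ha hb
      simp [inner_add_right, ha.1, ha.2, hb.1, hb.2]
  have hd0 : d = 0 := by
    have h1 := hyd d hd
    have hdyc : d = y - c := by rw [← hycd]; abel
    have h2 : ⟪y - c, d⟫ = 0 := by rw [inner_sub_left, h1.1, h1.2, sub_zero]
    rw [← hdyc] at h2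
    exact inner_self_eq_zero.mp h2
  rw [← hycd, hd0, add_zero]
  exact hc

end Helpers

/-- Graded (orbifold) stability for `Γ`-equivariant ADHM data: let `G` be a finite abelian
group with character group `Ĝ = AddChar G ℂˣ`, let `V = ⊕_{s∈Ĝ} V_s` and `W = ⊕_{s∈Ĝ} W_s`
be orthogonal decompositions of finite-dimensional complex inner product spaces, let
`B_a : V_s → V_{s·s_a}` and `I : W_s → V_s` be graded, and suppose the graded real moment
map equations hold with Fayet–Iliopoulos parameters `ζ_s > 0`.  Then any graded subspace
`S = ⊕_s S_s` with `S_s ⊆ V_s`, invariant under all `B_a` and containing the images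
`I(W_s)`, satisfies `S_s = V_s` for every `s`. -/
theorem orbifold_adhm_stability {G : Type*} [AddCommGroup G] [Fintype G]
    {V W : Type*}
    [NormedAddCommGroup V] [InnerProductSpace ℂ V] [FiniteDimensional ℂ V]
    [NormedAddCommGroup W] [InnerProductSpace ℂ W] [FiniteDimensional ℂ W]
    (Vsub : AddChar G ℂˣ → Submodule ℂ V) (Wsub : AddChar G ℂˣ → Submodule ℂ W)
    (hVorth : ∀ s s' : AddChar G ℂˣ, s ≠ s' →
      ∀ x ∈ Vsub s, ∀ y ∈ Vsub s', (inner ℂ x y : ℂ) = 0)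
    (hVtop : (⨆ s, Vsub s) = ⊤)
    (hWorth : ∀ s s' : AddChar G ℂˣ, s ≠ s' →
      ∀ x ∈ Wsub s, ∀ y ∈ Wsub s', (inner ℂ x y : ℂ) = 0)
    (hWtop : (⨆ s, Wsub s) = ⊤)
    (sa : Fin 4 → AddChar G ℂˣ)
    (B : Fin 4 → V →ₗ[ℂ] V) (I : W →ₗ[ℂ] V)
    (hB : ∀ (a : Fin 4) (s : AddChar G ℂˣ), ∀ x ∈ Vsub s, B a x ∈ Vsub (s * sa a))
    (hI : ∀ s : AddChar G ℂˣ, ∀ w ∈ Wsub s, I w ∈ Vsub s)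
    (ζ : AddChar G ℂˣ → ℝ) (hζ : ∀ s, 0 < ζ s)
    (hmom : ∀ s : AddChar G ℂˣ, ∀ x ∈ Vsub s,
      ((∑ a : Fin 4, (B a ∘ₗ LinearMap.adjoint (B a) - LinearMap.adjoint (B a) ∘ₗ B a))
          + I ∘ₗ LinearMap.adjoint I) x = (ζ s : ℂ) • x)
    (Ssub : AddChar G ℂˣ → Submodule ℂ V)
    (hSV : ∀ s, Ssub s ≤ Vsub s)
    (hSB : ∀ (a : Fin 4) (s : AddChar G ℂˣ), ∀ x ∈ Ssub s, B a x ∈ Ssub (s * sa a))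
    (hSI : ∀ s : AddChar G ℂˣ, ∀ w ∈ Wsub s, I w ∈ Ssub s) :
    ∀ s, Ssub s = Vsub s := by
  classical
  set S : Submodule ℂ V := ⨆ s, Ssub s with hSdef
  -- `I` maps into `S`
  have hIS : ∀ w : W, I w ∈ S := by
    intro w
    have hw : w ∈ ⨆ s, Wsub s := hWtop ▸ Submodule.mem_top
    refine Submodule.iSup_induction _ (motive := fun w => I w ∈ S) hw ?_ (by simp) ?_
    · intro s w hw
      exact Submodule.mem_iSup_of_mem s (hSI s w hw)
    · intro a b ha hb
      rw [map_add]; exact add_mem ha hb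
  -- `B a` preserves `S`
  have hBS : ∀ a : Fin 4, ∀ x ∈ S, B a x ∈ S := by
    intro a x hx
    refine Submodule.iSup_induction _ (motive := fun x => B a x ∈ S) hx ?_ (by simp) ?_
    · intro s y hy
      exact Submodule.mem_iSup_of_mem (s * sa a) (hSB a s y hy)
    · intro u v hu hv
      rw [map_add]; exact add_mem hu hv
  -- the adjoint of `I` kills `Sᗮ`
  have hIadj : ∀ x ∈ Sᗮ, LinearMap.adjoint I x = 0 := by
    intro x hx
    rw [← inner_self_eq_zero (𝕜 := ℂ)]
    rw [LinearMap.adjoint_inner_left]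
    exact Submodule.inner_left_of_mem_orthogonal (hIS _) hx
  -- the adjoints of the `B a` preserve `Sᗮ`
  have hBadjS : ∀ a : Fin 4, ∀ x ∈ Sᗮ, LinearMap.adjoint (B a) x ∈ Sᗮ := by
    intro a x hx
    rw [Submodule.mem_orthogonal]
    intro u hu
    rw [LinearMap.adjoint_inner_right]
    exact Submodule.inner_right_of_mem_orthogonal (hBS a u hu) hx
  -- the orthogonal projection onto `Sᗮ`
  set Q : V →ₗ[ℂ] V := Sᗮ.subtype ∘ₗ (Submodule.orthogonalProjection Sᗮ).toLinearMap with hQdef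
  have hQmem : ∀ x : V, Q x ∈ Sᗮ := fun x => (Submodule.orthogonalProjection Sᗮ x).2
  have hQfix : ∀ x ∈ Sᗮ, Q x = x := by
    intro x hx
    simpa [Q] using (Submodule.starProjection_eq_self_iff (K := Sᗮ)).mpr hx
  have hQzero : ∀ x ∈ S, Q x = 0 := by
    intro x hx
    have hx' : x ∈ Sᗮᗮ := Submodule.le_orthogonal_orthogonal S hx
    simp [Q, Submodule.orthogonalProjectionOnto_apply_of_mem_orthogonal hx']
  have hQinner : ∀ x y : V, ⟪Q x, y⟫ = ⟪x, Q y⟫ := fun x y =>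
    Submodule.inner_starProjection_left_eq_right Sᗮ x y
  have hQadj : LinearMap.adjoint Q = Q := ((LinearMap.eq_adjoint_iff Q Q).mpr hQinner).symm
  have hQnorm : ∀ x : V, ‖Q x‖ ≤ ‖x‖ := by
    intro x
    have h1 : x - Q x ∈ Sᗮᗮ := Submodule.sub_starProjection_mem_orthogonal (K := Sᗮ) x
    have h0 : ⟪x - Q x, Q x⟫ = 0 :=
      Submodule.inner_left_of_mem_orthogonal (hQmem x) h1
    have h2 : ‖x‖ ^ 2 = ‖x - Q x‖ ^ 2 + ‖Q x‖ ^ 2 := by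
      have h3 : ‖(x - Q x) + Q x‖ ^ 2
          = ‖x - Q x‖ ^ 2 + 2 * (RCLike.re (⟪x - Q x, Q x⟫)) + ‖Q x‖ ^ 2 :=
        norm_add_sq (𝕜 := ℂ) _ _
      rw [h0] at h3
      simpa using h3
    nlinarith [norm_nonneg (Q x), norm_nonneg x, norm_nonneg (x - Q x), sq_nonneg (‖x - Q x‖)]
  -- graded decomposition of elements of `Vsub s`
  have hdec : ∀ s : AddChar G ℂˣ, ∀ x ∈ Vsub s,
      ∃ u w, u ∈ Ssub s ∧ w ∈ Sᗮ ⊓ Vsub s ∧ x = u + w := by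
    intro s x hx
    set u : V := (Submodule.orthogonalProjection (Ssub s) x : V) with hu
    have huS : u ∈ Ssub s := (Submodule.orthogonalProjection (Ssub s) x).2
    have hwV : x - u ∈ Vsub s := sub_mem hx (hSV s huS)
    refine ⟨u, x - u, huS, Submodule.mem_inf.mpr ⟨?_, hwV⟩, by abel⟩
    rw [Submodule.mem_orthogonal]
    intro z hz
    refine Submodule.iSup_induction _ (motive := fun z => ⟪z, x - u⟫ = 0) hz ?_ (by simp) ?_
    · intro t z hzt
      by_cases ht : t = s
      · subst ht
        exact (Submodule.mem_orthogonal (Ssub t) (x - u)).mp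
          (Submodule.sub_starProjection_mem_orthogonal (K := Ssub t) x) z hzt
      · exact hVorth t s ht z (hSV t hzt) _ hwV
    · intro a b ha hb
      rw [inner_add_left, ha, hb, add_zero]
  -- `Q` preserves the grading
  have hQgrade : ∀ s : AddChar G ℂˣ, ∀ x ∈ Vsub s, Q x ∈ Vsub s := by
    intro s x hx
    obtain ⟨u, w, hu, hw, rfl⟩ := hdec s x hx
    rw [map_add, hQzero u (Submodule.mem_iSup_of_mem s hu), hQfix w (Submodule.mem_inf.mp hw).1, zero_add]
    exact (Submodule.mem_inf.mp hw).2
  -- the graded pieces of `Sᗮ`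
  set T : AddChar G ℂˣ → Submodule ℂ V := fun s => Sᗮ ⊓ Vsub s with hTdef
  have hSorthT : Sᗮ ≤ ⨆ s, T s := by
    have hle : ∀ s, Vsub s ≤ S ⊔ ⨆ t, T t := by
      intro s x hx
      obtain ⟨u, w, hu, hw, rfl⟩ := hdec s x hx
      exact add_mem (Submodule.mem_sup_left (Submodule.mem_iSup_of_mem s hu))
        (Submodule.mem_sup_right (Submodule.mem_iSup_of_mem s hw))
    intro x hx
    have hxt : x ∈ S ⊔ ⨆ t, T t := by
      have h : (⊤ : Submodule ℂ V) ≤ S ⊔ ⨆ t, T t := by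
        rw [← hVtop]; exact iSup_le hle
      exact h Submodule.mem_top
    obtain ⟨c, hc, d, hd, rfl⟩ := Submodule.mem_sup.mp hxt
    have hdS : d ∈ Sᗮ := (iSup_le (fun t => inf_le_left) : (⨆ t, T t) ≤ Sᗮ) hd
    have hcS : c ∈ Sᗮ := by simpa using sub_mem hx hdS
    have hc0 : c = 0 := by
      rw [← inner_self_eq_zero (𝕜 := ℂ) (x := c)]
      exact (Submodule.mem_orthogonal S c).mp hcS c hc
    rw [hc0, zero_add]
    exact hd
  -- adjoints of `B a` shift the grading by `(sa a)⁻¹`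
  have hBadjV : ∀ (a : Fin 4) (s : AddChar G ℂˣ), ∀ x ∈ Vsub s,
      LinearMap.adjoint (B a) x ∈ Vsub (s * (sa a)⁻¹) := by
    intro a s x hx
    refine mem_of_orthogonal_family Vsub hVorth hVtop _ _ ?_
    intro u' hu' z hz
    rw [LinearMap.adjoint_inner_left]
    refine hVorth s (u' * sa a) ?_ x hx (B a z) (hB a u' z hz)
    intro hcontr
    exact hu' (by rw [hcontr]; group)
  -- the auxiliary operators
  set X : Fin 4 → (V →ₗ[ℂ] V) := fun a => Q ∘ₗ LinearMap.adjoint (B a) ∘ₗ Q with hXdef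
  have hXapp : ∀ (a : Fin 4) (x : V), X a x = Q (LinearMap.adjoint (B a) (Q x)) := by
    intro a x; simp [X]
  have hXadj : ∀ a : Fin 4, LinearMap.adjoint (X a) = Q ∘ₗ B a ∘ₗ Q := by
    intro a
    simp [X, LinearMap.adjoint_comp, LinearMap.adjoint_adjoint, hQadj, LinearMap.comp_assoc]
  have hXadjapp : ∀ (a : Fin 4) (x : V), LinearMap.adjoint (X a) x = Q (B a (Q x)) := by
    intro a x; rw [hXadj]; simp
  set E : V →ₗ[ℂ] V :=
    ∑ a : Fin 4, (LinearMap.adjoint (X a) ∘ₗ X a - X a ∘ₗ LinearMap.adjoint (X a)) with hEdef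
  set φ : V → ℝ := fun x => (⟪x, E x⟫).re with hφdef
  have hinre : ∀ z : V, (⟪z, z⟫).re = ‖z‖ ^ 2 := by
    intro z
    have h := inner_self_eq_norm_sq (𝕜 := ℂ) z
    simpa using h
  have hinim : ∀ z : V, (⟪z, z⟫).im = 0 := by
    intro z
    have h := inner_self_im (𝕜 := ℂ) (x := z)
    rwa [RCLike.im_to_complex] at h
  have hEform : ∀ x : V, ⟪x, E x⟫
      = ∑ a : Fin 4, (⟪X a x, X a x⟫ - ⟪(LinearMap.adjoint (X a)) x, (LinearMap.adjoint (X a)) x⟫) := by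
    intro x
    rw [hEdef]
    simp only [LinearMap.sum_apply, LinearMap.sub_apply, LinearMap.comp_apply]
    rw [inner_sum]
    refine Finset.sum_congr rfl fun a _ => ?_
    rw [inner_sub_right, LinearMap.adjoint_inner_right,
      ← LinearMap.adjoint_inner_left (X a) ((LinearMap.adjoint (X a)) x) x]
  have hre : ∀ x : V, φ x
      = ∑ a : Fin 4, (‖X a x‖ ^ 2 - ‖(LinearMap.adjoint (X a)) x‖ ^ 2) := by
    intro x
    rw [hφdef]
    simp only
    rw [hEform x, Complex.re_sum]
    exact Finset.sum_congr rfl fun a _ => by rw [Complex.sub_re, hinre, hinre]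
  have htr : LinearMap.trace ℂ V E = 0 := by
    rw [hEdef, map_sum]
    refine Finset.sum_eq_zero fun a _ => ?_
    rw [map_sub, LinearMap.trace_comp_comm', sub_self]
  -- the key pointwise estimate on the graded pieces of `Sᗮ`
  have hkey : ∀ s : AddChar G ℂˣ, ∀ y ∈ T s, ζ s * ‖y‖ ^ 2 ≤ φ y := by
    intro s y hy
    obtain ⟨hyS, hyV⟩ := Submodule.mem_inf.mp hy
    have hQy : Q y = y := hQfix y hyS
    have hXy : ∀ a, X a y = LinearMap.adjoint (B a) y := by
      intro a
      rw [hXapp, hQy, hQfix _ (hBadjS a y hyS)]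
    have hXay : ∀ a, ‖LinearMap.adjoint (X a) y‖ ≤ ‖B a y‖ := by
      intro a
      rw [hXadjapp, hQy]
      exact hQnorm (B a y)
    -- the moment map identity evaluated at `y`
    have hmm := hmom s y hyV
    have h1 : ⟪y, ((∑ a : Fin 4,
        (B a ∘ₗ LinearMap.adjoint (B a) - LinearMap.adjoint (B a) ∘ₗ B a))
          + I ∘ₗ LinearMap.adjoint I) y⟫ = (ζ s : ℂ) * ⟪y, y⟫ := by
      rw [hmm, inner_smul_right]
    have hIterm : ⟪y, (I ∘ₗ LinearMap.adjoint I) y⟫ = 0 := by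
      simp [LinearMap.comp_apply, hIadj y hyS]
    rw [LinearMap.add_apply, inner_add_right, hIterm, add_zero, LinearMap.sum_apply,
      inner_sum] at h1
    have h1re := congrArg Complex.re h1
    rw [Complex.re_sum] at h1re
    have hterm : ∀ a : Fin 4,
        (⟪y, (B a ∘ₗ LinearMap.adjoint (B a) - LinearMap.adjoint (B a) ∘ₗ B a) y⟫).re
          = ‖LinearMap.adjoint (B a) y‖ ^ 2 - ‖B a y‖ ^ 2 := by
      intro a
      rw [LinearMap.sub_apply, LinearMap.comp_apply, LinearMap.comp_apply, inner_sub_right,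
        LinearMap.adjoint_inner_right (B a) y ((B a) y),
        ← LinearMap.adjoint_inner_left (B a) ((LinearMap.adjoint (B a)) y) y,
        Complex.sub_re, hinre, hinre]
    have hmom_re : ∑ a : Fin 4, (‖(LinearMap.adjoint (B a)) y‖ ^ 2 - ‖(B a) y‖ ^ 2)
        = ζ s * ‖y‖ ^ 2 := by
      have h2 : ((ζ s : ℂ) * ⟪y, y⟫).re = ζ s * ‖y‖ ^ 2 := by
        rw [Complex.mul_re, Complex.ofReal_re, Complex.ofReal_im, hinre, hinim]
        ring
      rw [← h2, ← h1re]
      exact Finset.sum_congr rfl fun a _ => (hterm a).symm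
    rw [hre y, ← hmom_re]
    refine Finset.sum_le_sum fun a _ => ?_
    rw [hXy a]
    have h4 := hXay a
    nlinarith [norm_nonneg (LinearMap.adjoint (X a) y), norm_nonneg (B a y)]
  -- `E` preserves the grading
  have hXgrade : ∀ (a : Fin 4) (s : AddChar G ℂˣ), ∀ x ∈ Vsub s,
      X a x ∈ Vsub (s * (sa a)⁻¹) := by
    intro a s x hx
    rw [hXapp]
    exact hQgrade _ _ (hBadjV a s _ (hQgrade s x hx))
  have hXadjgrade : ∀ (a : Fin 4) (s : AddChar G ℂˣ), ∀ x ∈ Vsub s,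
      LinearMap.adjoint (X a) x ∈ Vsub (s * sa a) := by
    intro a s x hx
    rw [hXadjapp]
    exact hQgrade _ _ (hB a s _ (hQgrade s x hx))
  have hEgrade : ∀ s : AddChar G ℂˣ, ∀ y ∈ Vsub s, E y ∈ Vsub s := by
    intro s y hy
    rw [hEdef]
    simp only [LinearMap.sum_apply, LinearMap.sub_apply, LinearMap.comp_apply]
    refine Submodule.sum_mem _ fun a _ => Submodule.sub_mem _ ?_ ?_
    · have h2 := hXadjgrade a _ _ (hXgrade a s y hy)
      have he : s * (sa a)⁻¹ * sa a = s := by group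
      rwa [he] at h2
    · have h2 := hXgrade a _ _ (hXadjgrade a s y hy)
      have he : s * sa a * (sa a)⁻¹ = s := by group
      rwa [he] at h2
  have hEcross : ∀ s t : AddChar G ℂˣ, s ≠ t → ∀ z ∈ T s, ∀ y ∈ T t, ⟪z, E y⟫ = 0 := by
    intro s t hst z hz y hy
    exact hVorth s t hst z (Submodule.mem_inf.mp hz).2 (E y) (hEgrade t y (Submodule.mem_inf.mp hy).2)
  -- `φ` is invariant under `Q`
  have hφQ : ∀ x : V, φ x = φ (Q x) := by
    intro x
    have hQQ : Q (Q x) = Q x := hQfix _ (hQmem x)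
    rw [hre x, hre (Q x)]
    refine Finset.sum_congr rfl fun a _ => ?_
    rw [hXapp, hXapp, hXadjapp, hXadjapp, hQQ]
  -- global nonnegativity of `φ`
  have hφpos : ∀ x : V, 0 ≤ φ x := by
    intro x
    rw [hφQ x]
    have hx' : Q x ∈ ⨆ s, T s := hSorthT (hQmem x)
    obtain ⟨f, hfmem, hfsum⟩ := (Submodule.mem_iSup_iff_exists_finsupp T (Q x)).mp hx'
    have hsum : Q x = ∑ i ∈ f.support, f i := by
      rw [← hfsum]; rfl
    have hexp : ⟪Q x, E (Q x)⟫ = ∑ t ∈ f.support, ⟪f t, E (f t)⟫ := by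
      conv_lhs => rw [hsum, map_sum, inner_sum]
      refine Finset.sum_congr rfl fun t ht => ?_
      rw [sum_inner]
      refine Finset.sum_eq_single_of_mem t ht fun s hs hst =>
        hEcross s t hst (f s) (hfmem s) (f t) (hfmem t)
    have hsplit : φ (Q x) = ∑ t ∈ f.support, φ (f t) := by
      rw [hφdef]
      simp only
      rw [hexp, Complex.re_sum]
    rw [hsplit]
    refine Finset.sum_nonneg fun t _ => le_trans ?_ (hkey t (f t) (hfmem t))
    exact mul_nonneg (hζ t).le (sq_nonneg _)
  -- every graded piece of `Sᗮ` vanishes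
  have hTbot : ∀ s : AddChar G ℂˣ, ∀ y ∈ T s, y = 0 := by
    intro s y hy
    by_contra hy0
    have hny : ‖y‖ ≠ 0 := fun h => hy0 (norm_eq_zero.mp h)
    set y' : V := ((‖y‖ : ℂ))⁻¹ • y with hy'def
    have hny' : ‖y'‖ = 1 := by
      rw [hy'def, norm_smul]
      simp [norm_inv, hny]
    have hy'T : y' ∈ T s := Submodule.smul_mem _ _ hy
    have hON : Orthonormal ℂ ((↑) : ({y'} : Set V) → V) := by
      refine ⟨?_, ?_⟩
      · rintro ⟨z, hz⟩
        rw [Set.mem_singleton_iff] at hz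
        subst hz
        exact hny'
      · rintro ⟨z1, h1⟩ ⟨z2, h2⟩ hne
        rw [Set.mem_singleton_iff] at h1 h2
        exact absurd (Subtype.ext (h1.trans h2.symm)) hne
    obtain ⟨u, b, hsub, hb⟩ := hON.exists_orthonormalBasis_extension
    have hy'u : y' ∈ u := hsub rfl
    have htr2 : (0 : ℝ) = ∑ i : u, φ (b i) := by
      have h1 := trace_eq_sum_inner_aux b E
      rw [htr] at h1
      have h2 := congrArg Complex.re h1
      rw [Complex.re_sum] at h2
      simpa [hφdef] using h2
    have hpos : 0 < ∑ i : u, φ (b i) := by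
      refine Finset.sum_pos' (fun i _ => hφpos _) ⟨⟨y', hy'u⟩, Finset.mem_univ _, ?_⟩
      have hbv : b ⟨y', hy'u⟩ = y' := by rw [hb]
      rw [hbv]
      calc (0 : ℝ) < ζ s * ‖y'‖ ^ 2 := by
            rw [hny']; simpa using hζ s
        _ ≤ φ y' := hkey s y' hy'T
    linarith [htr2, hpos]
  -- conclusion
  intro s
  refine le_antisymm (hSV s) ?_
  intro x hx
  obtain ⟨u, w, hu, hw, rfl⟩ := hdec s x hx
  rw [hTbot s w hw, add_zero]
  exact hu
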